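/- A multiveblen configuration M(X, p, 𝒫, H) where |X| = n and H is a (binomial(n,2)_{n-2}, binomial(n,3)_3)-configuration is a (binomial(n+2,2)_n, binomial(n+2,3)_3)-configuration: it has binomial(n+2,2) points, binomial(n+2,3) lines, each point on n lines and each line with 3 points, with any two points on at most one line. -/
import Mathlib


/-! Multiveblen configurations `M(X, p, 𝒫, H)`. -/

/-- 2-subsets of `X`. -/
abbrev P2 (X : Type*) [DecidableEq X] := {z : Finset X // z.card = 2}

/-- The point set of a multiveblen configuration: the center `p`, the points
`a_i`, `b_i` (`i ∈ X`), and the points `c_z` (`z ∈ ℘_2(X)`). -/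
abbrev MVPoint (X : Type*) [DecidableEq X] := Unit ⊕ ((Bool × X) ⊕ P2 X)

variable {X : Type*} [Fintype X] [DecidableEq X]

/-- The center `p`. -/
def ppt : MVPoint X := Sum.inl ()
/-- The point `a_i`. -/
def apt (i : X) : MVPoint X := Sum.inr (Sum.inl (false, i))
/-- The point `b_i`. -/
def bpt (i : X) : MVPoint X := Sum.inr (Sum.inl (true, i))
/-- The point `c_z`. -/
def cpt (z : P2 X) : MVPoint X := Sum.inr (Sum.inr z)
/-- The 2-subset `{i, j}`. -/
def pr (i j : X) (h : i ≠ j) : P2 X := ⟨{i, j}, Finset.card_pair h⟩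

/-- The lines of the multiveblen configuration `M(X, p, 𝒫, H)`:
`{a_i, b_j, c_{ij}}` and `{a_j, b_i, c_{ij}}` for `{i,j} ∉ 𝒫`;
`{a_i, a_j, c_{ij}}` and `{b_i, b_j, c_{ij}}` for `{i,j} ∈ 𝒫`;
`{p, a_i, b_i}` for `i ∈ X`; and `{c_u, c_v, c_w}` for each line
`{u, v, w}` of `H`. -/
def MVlines (P : Set (P2 X)) (H : Set (Finset (P2 X))) :
    Set (Finset (MVPoint X)) :=
  {L | ∃ i j, ∃ h : i ≠ j, pr i j h ∉ P ∧ L = {apt i, bpt j, cpt (pr i j h)}} ∪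
  {L | ∃ i j, ∃ h : i ≠ j, pr i j h ∈ P ∧ L = {apt i, apt j, cpt (pr i j h)}} ∪
  {L | ∃ i j, ∃ h : i ≠ j, pr i j h ∈ P ∧ L = {bpt i, bpt j, cpt (pr i j h)}} ∪
  {L | ∃ i, L = {ppt, apt i, bpt i}} ∪
  {L | ∃ h ∈ H, L = h.image cpt}

set_option linter.unusedSectionVars false
set_option maxHeartbeats 1000000

@[simp] lemma apt_inj {i j : X} : apt i = apt j ↔ i = j := by simp [apt]
@[simp] lemma bpt_inj {i j : X} : bpt i = bpt j ↔ i = j := by simp [bpt]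
@[simp] lemma cpt_inj {z w : P2 X} : cpt z = cpt w ↔ z = w := by simp [cpt]
@[simp] lemma apt_ne_bpt {i j : X} : apt i ≠ bpt j := by simp [apt, bpt]
@[simp] lemma bpt_ne_apt {i j : X} : bpt i ≠ apt j := by simp [apt, bpt]
@[simp] lemma apt_ne_cpt {i : X} {z} : apt i ≠ cpt z := by simp [apt, cpt]
@[simp] lemma cpt_ne_apt {i : X} {z} : cpt z ≠ apt i := by simp [apt, cpt]
@[simp] lemma bpt_ne_cpt {i : X} {z} : bpt i ≠ cpt z := by simp [bpt, cpt]
@[simp] lemma cpt_ne_bpt {i : X} {z} : cpt z ≠ bpt i := by simp [bpt, cpt]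
@[simp] lemma ppt_ne_apt {i : X} : (ppt : MVPoint X) ≠ apt i := by simp [ppt, apt]
@[simp] lemma ppt_ne_bpt {i : X} : (ppt : MVPoint X) ≠ bpt i := by simp [ppt, bpt]
@[simp] lemma ppt_ne_cpt {z} : (ppt : MVPoint X) ≠ cpt z := by simp [ppt, cpt]
@[simp] lemma apt_ne_ppt {i : X} : apt i ≠ (ppt : MVPoint X) := by simp [ppt, apt]
@[simp] lemma bpt_ne_ppt {i : X} : bpt i ≠ (ppt : MVPoint X) := by simp [ppt, bpt]
@[simp] lemma cpt_ne_ppt {z} : (cpt z : MVPoint X) ≠ ppt := by simp [ppt, cpt]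

lemma cpt_injective : Function.Injective (cpt (X := X)) := fun _ _ h => cpt_inj.1 h

lemma pr_comm (i j : X) (h : i ≠ j) : pr i j h = pr j i h.symm :=
  Subtype.ext (Finset.pair_comm i j)

lemma pair_eq {a b c d : X} (hab : a ≠ b) (h : ({a, b} : Finset X) = {c, d}) :
    (a = c ∧ b = d) ∨ (a = d ∧ b = c) := by
  have ha : a ∈ ({c, d} : Finset X) := h ▸ by simp
  have hb : b ∈ ({c, d} : Finset X) := h ▸ by simp
  have hc : c ∈ ({a, b} : Finset X) := h ▸ by simp
  simp only [Finset.mem_insert, Finset.mem_singleton] at ha hb hc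
  rcases ha with rfl | rfl
  · rcases hb with rfl | rfl
    · exact absurd rfl hab
    · exact Or.inl ⟨rfl, rfl⟩
  · rcases hb with rfl | rfl
    · exact Or.inr ⟨rfl, rfl⟩
    · rcases hc with rfl | rfl <;> simp_all

lemma pr_eq_iff {i j k l : X} {h : i ≠ j} {h' : k ≠ l} :
    pr i j h = pr k l h' ↔ (i = k ∧ j = l) ∨ (i = l ∧ j = k) := by
  constructor
  · intro he
    exact pair_eq h (congrArg Subtype.val he)
  · rintro (⟨rfl, rfl⟩ | ⟨rfl, rfl⟩)
    · rfl
    · exact pr_comm _ _ _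

lemma cpt_notMem_image {z : P2 X} (h : Finset (P2 X)) : cpt z ∈ h.image cpt ↔ z ∈ h := by
  simp

lemma apt_notMem_image {i : X} (h : Finset (P2 X)) : apt i ∉ h.image cpt := by
  simp

variable {P : Set (P2 X)} {H : Set (Finset (P2 X))}

lemma mem_MVlines {L : Finset (MVPoint X)} : L ∈ MVlines P H ↔
    (∃ i j, ∃ h : i ≠ j, pr i j h ∉ P ∧ L = {apt i, bpt j, cpt (pr i j h)}) ∨
    (∃ i j, ∃ h : i ≠ j, pr i j h ∈ P ∧ L = {apt i, apt j, cpt (pr i j h)}) ∨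
    (∃ i j, ∃ h : i ≠ j, pr i j h ∈ P ∧ L = {bpt i, bpt j, cpt (pr i j h)}) ∨
    (∃ i, L = {ppt, apt i, bpt i}) ∨
    (∃ h ∈ H, L = h.image cpt) := by
  simp [MVlines, Set.mem_union, or_assoc]

set_option maxHeartbeats 1000000

lemma pr_comm' (i j : X) (h : i ≠ j) (h' : j ≠ i) : pr i j h = pr j i h' :=
  Subtype.ext (Finset.pair_comm i j)

lemma triple_swap (f g : X → MVPoint X) (i j : X) (h : i ≠ j) (h' : j ≠ i) :
    ({f i, g j, cpt (pr i j h)} : Finset (MVPoint X)) = {g j, f i, cpt (pr j i h')} := by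
  rw [Finset.insert_comm, pr_comm' i j h h']

lemma line_ppt {L : Finset (MVPoint X)} (hL : L ∈ MVlines P H) (h : (ppt : MVPoint X) ∈ L) :
    ∃ i, L = {ppt, apt i, bpt i} := by
  rcases mem_MVlines.1 hL with ⟨k, l, hkl, hP, rfl⟩ | ⟨k, l, hkl, hP, rfl⟩ |
    ⟨k, l, hkl, hP, rfl⟩ | ⟨k, rfl⟩ | ⟨hh, hhH, rfl⟩
  · simp at h
  · simp at h
  · simp at h
  · exact ⟨k, rfl⟩
  · simp [Finset.mem_image] at h

lemma line_aa {L : Finset (MVPoint X)} {i j : X} (hL : L ∈ MVlines P H) (hij : i ≠ j)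
    (hi : apt i ∈ L) (hj : apt j ∈ L) : L = {apt i, apt j, cpt (pr i j hij)} := by
  rcases mem_MVlines.1 hL with ⟨k, l, hkl, hP, rfl⟩ | ⟨k, l, hkl, hP, rfl⟩ |
    ⟨k, l, hkl, hP, rfl⟩ | ⟨k, rfl⟩ | ⟨hh, hhH, rfl⟩
  · simp at hi hj; subst hi; subst hj; exact absurd rfl hij
  · simp at hi hj
    rcases hi with rfl | rfl <;> rcases hj with rfl | rfl
    · exact absurd rfl hij
    · rfl
    · exact triple_swap apt apt _ _ _ hij
    · exact absurd rfl hij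
  · simp at hi
  · simp at hi hj; subst hi; subst hj; exact absurd rfl hij
  · simp [Finset.mem_image] at hi

lemma line_bb {L : Finset (MVPoint X)} {i j : X} (hL : L ∈ MVlines P H) (hij : i ≠ j)
    (hi : bpt i ∈ L) (hj : bpt j ∈ L) : L = {bpt i, bpt j, cpt (pr i j hij)} := by
  rcases mem_MVlines.1 hL with ⟨k, l, hkl, hP, rfl⟩ | ⟨k, l, hkl, hP, rfl⟩ |
    ⟨k, l, hkl, hP, rfl⟩ | ⟨k, rfl⟩ | ⟨hh, hhH, rfl⟩
  · simp at hi hj; subst hi; subst hj; exact absurd rfl hij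
  · simp at hi
  · simp at hi hj
    rcases hi with rfl | rfl <;> rcases hj with rfl | rfl
    · exact absurd rfl hij
    · rfl
    · exact triple_swap bpt bpt _ _ _ hij
    · exact absurd rfl hij
  · simp at hi hj; subst hi; subst hj; exact absurd rfl hij
  · simp [Finset.mem_image] at hi

lemma line_ab_ne {L : Finset (MVPoint X)} {i j : X} (hL : L ∈ MVlines P H) (hij : i ≠ j)
    (hi : apt i ∈ L) (hj : bpt j ∈ L) : L = {apt i, bpt j, cpt (pr i j hij)} := by
  rcases mem_MVlines.1 hL with ⟨k, l, hkl, hP, rfl⟩ | ⟨k, l, hkl, hP, rfl⟩ |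
    ⟨k, l, hkl, hP, rfl⟩ | ⟨k, rfl⟩ | ⟨hh, hhH, rfl⟩
  · simp at hi hj; subst hi; subst hj; rfl
  · simp at hj
  · simp at hi
  · simp at hi hj; subst hi; subst hj; exact absurd rfl hij
  · simp [Finset.mem_image] at hi

lemma line_ab_eq {L : Finset (MVPoint X)} {i : X} (hL : L ∈ MVlines P H)
    (hi : apt i ∈ L) (hj : bpt i ∈ L) : L = {ppt, apt i, bpt i} := by
  rcases mem_MVlines.1 hL with ⟨k, l, hkl, hP, rfl⟩ | ⟨k, l, hkl, hP, rfl⟩ |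
    ⟨k, l, hkl, hP, rfl⟩ | ⟨k, rfl⟩ | ⟨hh, hhH, rfl⟩
  · simp at hi hj; subst hi; subst hj; exact absurd rfl hkl
  · simp at hj
  · simp at hi
  · simp at hi; subst hi; rfl
  · simp [Finset.mem_image] at hi

lemma line_ac {L : Finset (MVPoint X)} {i : X} {z : P2 X} (hL : L ∈ MVlines P H)
    (hi : apt i ∈ L) (hz : cpt z ∈ L) :
    ∃ j, ∃ hij : i ≠ j, z = pr i j hij ∧
      ((pr i j hij ∈ P ∧ L = {apt i, apt j, cpt (pr i j hij)}) ∨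
       (pr i j hij ∉ P ∧ L = {apt i, bpt j, cpt (pr i j hij)})) := by
  rcases mem_MVlines.1 hL with ⟨k, l, hkl, hP, rfl⟩ | ⟨k, l, hkl, hP, rfl⟩ |
    ⟨k, l, hkl, hP, rfl⟩ | ⟨k, rfl⟩ | ⟨hh, hhH, rfl⟩
  · simp at hi hz; subst hi; subst hz
    exact ⟨l, hkl, rfl, Or.inr ⟨hP, rfl⟩⟩
  · simp at hi hz; subst hz
    rcases hi with rfl | rfl
    · exact ⟨l, hkl, rfl, Or.inl ⟨hP, rfl⟩⟩
    · refine ⟨k, Ne.symm hkl, pr_comm' k i hkl (Ne.symm hkl), Or.inl ⟨?_, ?_⟩⟩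
      · rwa [pr_comm' i k (Ne.symm hkl) hkl]
      · exact (triple_swap apt apt i k (Ne.symm hkl) hkl).symm
  · simp at hi
  · simp at hz
  · simp [Finset.mem_image] at hi

lemma line_bc {L : Finset (MVPoint X)} {i : X} {z : P2 X} (hL : L ∈ MVlines P H)
    (hi : bpt i ∈ L) (hz : cpt z ∈ L) :
    ∃ j, ∃ hij : i ≠ j, z = pr i j hij ∧
      ((pr i j hij ∈ P ∧ L = {bpt i, bpt j, cpt (pr i j hij)}) ∨
       (pr i j hij ∉ P ∧ L = {apt j, bpt i, cpt (pr i j hij)})) := by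
  rcases mem_MVlines.1 hL with ⟨k, l, hkl, hP, rfl⟩ | ⟨k, l, hkl, hP, rfl⟩ |
    ⟨k, l, hkl, hP, rfl⟩ | ⟨k, rfl⟩ | ⟨hh, hhH, rfl⟩
  · simp at hi hz; subst hi; subst hz
    refine ⟨k, Ne.symm hkl, pr_comm' k i hkl (Ne.symm hkl), Or.inr ⟨?_, ?_⟩⟩
    · rwa [pr_comm' i k (Ne.symm hkl) hkl]
    · rw [pr_comm' i k (Ne.symm hkl) hkl]
  · simp at hi
  · simp at hi hz; subst hz
    rcases hi with rfl | rfl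
    · exact ⟨l, hkl, rfl, Or.inl ⟨hP, rfl⟩⟩
    · refine ⟨k, Ne.symm hkl, pr_comm' k i hkl (Ne.symm hkl), Or.inl ⟨?_, ?_⟩⟩
      · rwa [pr_comm' i k (Ne.symm hkl) hkl]
      · exact (triple_swap bpt bpt i k (Ne.symm hkl) hkl).symm
  · simp at hz
  · simp [Finset.mem_image] at hi

lemma line_cc {L : Finset (MVPoint X)} {z w : P2 X} (hL : L ∈ MVlines P H) (hzw : z ≠ w)
    (hz : cpt z ∈ L) (hw : cpt w ∈ L) :
    ∃ h ∈ H, L = h.image cpt ∧ z ∈ h ∧ w ∈ h := by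
  rcases mem_MVlines.1 hL with ⟨k, l, hkl, hP, rfl⟩ | ⟨k, l, hkl, hP, rfl⟩ |
    ⟨k, l, hkl, hP, rfl⟩ | ⟨k, rfl⟩ | ⟨hh, hhH, rfl⟩
  · simp at hz hw; subst hz; subst hw; exact absurd rfl hzw
  · simp at hz hw; subst hz; subst hw; exact absurd rfl hzw
  · simp at hz hw; subst hz; subst hw; exact absurd rfl hzw
  · simp at hz
  · simp [Finset.mem_image] at hz hw
    exact ⟨hh, hhH, rfl, hz, hw⟩

lemma point_cases (p : MVPoint X) :
    p = ppt ∨ (∃ i, p = apt i) ∨ (∃ i, p = bpt i) ∨ ∃ z, p = cpt z := by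
  rcases p with _ | ⟨⟨b, i⟩ | z⟩
  · exact Or.inl rfl
  · cases b
    · exact Or.inr (Or.inl ⟨i, rfl⟩)
    · exact Or.inr (Or.inr (Or.inl ⟨i, rfl⟩))
  · exact Or.inr (Or.inr (Or.inr ⟨z, rfl⟩))

section uniq
variable {L₁ L₂ : Finset (MVPoint X)}

lemma uniq_pa (hL₁ : L₁ ∈ MVlines P H) (hL₂ : L₂ ∈ MVlines P H) {i : X}
    (hp1 : (ppt : MVPoint X) ∈ L₁) (hi1 : apt i ∈ L₁)
    (hp2 : (ppt : MVPoint X) ∈ L₂) (hi2 : apt i ∈ L₂) : L₁ = L₂ := by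
  obtain ⟨k, rfl⟩ := line_ppt hL₁ hp1
  obtain ⟨k', rfl⟩ := line_ppt hL₂ hp2
  simp at hi1 hi2; subst hi1; subst hi2; rfl

lemma uniq_pb (hL₁ : L₁ ∈ MVlines P H) (hL₂ : L₂ ∈ MVlines P H) {i : X}
    (hp1 : (ppt : MVPoint X) ∈ L₁) (hi1 : bpt i ∈ L₁)
    (hp2 : (ppt : MVPoint X) ∈ L₂) (hi2 : bpt i ∈ L₂) : L₁ = L₂ := by
  obtain ⟨k, rfl⟩ := line_ppt hL₁ hp1
  obtain ⟨k', rfl⟩ := line_ppt hL₂ hp2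
  simp at hi1 hi2; subst hi1; subst hi2; rfl

lemma uniq_pc (hL₁ : L₁ ∈ MVlines P H) {z : P2 X}
    (hp1 : (ppt : MVPoint X) ∈ L₁) (hz1 : cpt z ∈ L₁) : False := by
  obtain ⟨k, rfl⟩ := line_ppt hL₁ hp1
  simp at hz1

lemma uniq_ab (hL₁ : L₁ ∈ MVlines P H) (hL₂ : L₂ ∈ MVlines P H) {i j : X}
    (hi1 : apt i ∈ L₁) (hj1 : bpt j ∈ L₁)
    (hi2 : apt i ∈ L₂) (hj2 : bpt j ∈ L₂) : L₁ = L₂ := by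
  by_cases h : i = j
  · subst h
    rw [line_ab_eq hL₁ hi1 hj1, line_ab_eq hL₂ hi2 hj2]
  · rw [line_ab_ne hL₁ h hi1 hj1, line_ab_ne hL₂ h hi2 hj2]

lemma uniq_ac (hL₁ : L₁ ∈ MVlines P H) (hL₂ : L₂ ∈ MVlines P H) {i : X} {z : P2 X}
    (hi1 : apt i ∈ L₁) (hz1 : cpt z ∈ L₁)
    (hi2 : apt i ∈ L₂) (hz2 : cpt z ∈ L₂) : L₁ = L₂ := by
  obtain ⟨j, hij, hz, hc⟩ := line_ac hL₁ hi1 hz1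
  obtain ⟨j', hij', hz', hc'⟩ := line_ac hL₂ hi2 hz2
  obtain rfl : j = j' := by
    rcases pr_eq_iff.1 (hz.symm.trans hz') with ⟨_, h⟩ | ⟨h1, h2⟩
    · exact h
    · exact absurd h2.symm hij
  rcases hc with ⟨hP, e1⟩ | ⟨hP, e1⟩ <;> rcases hc' with ⟨hP', e2⟩ | ⟨hP', e2⟩
  · exact e1.trans e2.symm
  · exact absurd hP hP'
  · exact absurd hP' hP
  · exact e1.trans e2.symm

lemma uniq_bc (hL₁ : L₁ ∈ MVlines P H) (hL₂ : L₂ ∈ MVlines P H) {i : X} {z : P2 X}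
    (hi1 : bpt i ∈ L₁) (hz1 : cpt z ∈ L₁)
    (hi2 : bpt i ∈ L₂) (hz2 : cpt z ∈ L₂) : L₁ = L₂ := by
  obtain ⟨j, hij, hz, hc⟩ := line_bc hL₁ hi1 hz1
  obtain ⟨j', hij', hz', hc'⟩ := line_bc hL₂ hi2 hz2
  obtain rfl : j = j' := by
    rcases pr_eq_iff.1 (hz.symm.trans hz') with ⟨_, h⟩ | ⟨h1, h2⟩
    · exact h
    · exact absurd h2.symm hij
  rcases hc with ⟨hP, e1⟩ | ⟨hP, e1⟩ <;> rcases hc' with ⟨hP', e2⟩ | ⟨hP', e2⟩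
  · exact e1.trans e2.symm
  · exact absurd hP hP'
  · exact absurd hP' hP
  · exact e1.trans e2.symm

end uniq

lemma MV_linear
    (hHsts : ∀ h₁ ∈ H, ∀ h₂ ∈ H, ∀ z w : P2 X,
      z ≠ w → z ∈ h₁ → w ∈ h₁ → z ∈ h₂ → w ∈ h₂ → h₁ = h₂) :
    ∀ L₁ ∈ MVlines P H, ∀ L₂ ∈ MVlines P H, ∀ p q : MVPoint X,
      p ≠ q → p ∈ L₁ → q ∈ L₁ → p ∈ L₂ → q ∈ L₂ → L₁ = L₂ := by
  intro L₁ hL₁ L₂ hL₂ p q hpq hp1 hq1 hp2 hq2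
  rcases point_cases p with rfl | ⟨i, rfl⟩ | ⟨i, rfl⟩ | ⟨z, rfl⟩ <;>
    rcases point_cases q with rfl | ⟨i', rfl⟩ | ⟨i', rfl⟩ | ⟨z', rfl⟩
  · exact absurd rfl hpq
  · exact uniq_pa hL₁ hL₂ hp1 hq1 hp2 hq2
  · exact uniq_pb hL₁ hL₂ hp1 hq1 hp2 hq2
  · exact absurd (uniq_pc hL₁ hp1 hq1) id
  · exact uniq_pa hL₁ hL₂ hq1 hp1 hq2 hp2
  · have hij : i ≠ i' := fun h => hpq (by rw [h])
    rw [line_aa hL₁ hij hp1 hq1, line_aa hL₂ hij hp2 hq2]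
  · exact uniq_ab hL₁ hL₂ hp1 hq1 hp2 hq2
  · exact uniq_ac hL₁ hL₂ hp1 hq1 hp2 hq2
  · exact uniq_pb hL₁ hL₂ hq1 hp1 hq2 hp2
  · exact uniq_ab hL₁ hL₂ hq1 hp1 hq2 hp2
  · have hij : i ≠ i' := fun h => hpq (by rw [h])
    rw [line_bb hL₁ hij hp1 hq1, line_bb hL₂ hij hp2 hq2]
  · exact uniq_bc hL₁ hL₂ hp1 hq1 hp2 hq2
  · exact absurd (uniq_pc hL₁ hq1 hp1) id
  · exact uniq_ac hL₁ hL₂ hq1 hp1 hq2 hp2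
  · exact uniq_bc hL₁ hL₂ hq1 hp1 hq2 hp2
  · have hzw : z ≠ z' := fun h => hpq (by rw [h])
    obtain ⟨h₁, hh₁, rfl, hz₁, hw₁⟩ := line_cc hL₁ hzw hp1 hq1
    obtain ⟨h₂, hh₂, rfl, hz₂, hw₂⟩ := line_cc hL₂ hzw hp2 hq2
    rw [hHsts h₁ hh₁ h₂ hh₂ z z' hzw hz₁ hw₁ hz₂ hw₂]

open Classical in
noncomputable def pfst (z : P2 X) : X := (Finset.card_eq_two.1 z.2).choose
open Classical in
noncomputable def psnd (z : P2 X) : X := (Finset.card_eq_two.1 z.2).choose_spec.choose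

lemma pfst_ne_psnd (z : P2 X) : pfst z ≠ psnd z :=
  (Finset.card_eq_two.1 z.2).choose_spec.choose_spec.1

lemma pr_pfst_psnd (z : P2 X) : pr (pfst z) (psnd z) (pfst_ne_psnd z) = z :=
  Subtype.ext ((Finset.card_eq_two.1 z.2).choose_spec.choose_spec.2).symm

lemma coe_z (z : P2 X) : z.1 = {pfst z, psnd z} :=
  (Finset.card_eq_two.1 z.2).choose_spec.choose_spec.2

noncomputable def mka (z : P2 X) : Finset (MVPoint X) := {apt (pfst z), bpt (psnd z), cpt z}
noncomputable def mkb (z : P2 X) : Finset (MVPoint X) := {apt (psnd z), bpt (pfst z), cpt z}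
noncomputable def mk2 (z : P2 X) : Finset (MVPoint X) := {apt (pfst z), apt (psnd z), cpt z}
noncomputable def mk3 (z : P2 X) : Finset (MVPoint X) := {bpt (pfst z), bpt (psnd z), cpt z}
def pline (i : X) : Finset (MVPoint X) := {ppt, apt i, bpt i}

lemma S1_eq : {L | ∃ i j, ∃ h : i ≠ j, pr i j h ∉ P ∧ L = {apt i, bpt j, cpt (pr i j h)}} =
    mka '' Pᶜ ∪ mkb '' Pᶜ := by
  ext L
  constructor
  · rintro ⟨i, j, hij, hP, rfl⟩
    rcases pair_eq (pfst_ne_psnd (pr i j hij)) ((coe_z (pr i j hij)).symm.trans rfl)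
      with ⟨h1, h2⟩ | ⟨h1, h2⟩
    · exact Or.inl ⟨pr i j hij, hP, by unfold mka; rw [h1, h2]⟩
    · exact Or.inr ⟨pr i j hij, hP, by unfold mkb; rw [h1, h2]⟩
  · rintro (⟨z, hz, rfl⟩ | ⟨z, hz, rfl⟩)
    · refine ⟨pfst z, psnd z, pfst_ne_psnd z, ?_, ?_⟩
      · rw [pr_pfst_psnd z]; exact hz
      · unfold mka; rw [pr_pfst_psnd]
    · refine ⟨psnd z, pfst z, (pfst_ne_psnd z).symm, ?_, ?_⟩
      · rw [pr_comm' _ _ _ (pfst_ne_psnd z), pr_pfst_psnd z]; exact hz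
      · unfold mkb; rw [pr_comm' _ _ _ (pfst_ne_psnd z), pr_pfst_psnd]

lemma S2_eq : {L | ∃ i j, ∃ h : i ≠ j, pr i j h ∈ P ∧ L = {apt i, apt j, cpt (pr i j h)}} =
    mk2 '' P := by
  ext L
  constructor
  · rintro ⟨i, j, hij, hP, rfl⟩
    rcases pair_eq (pfst_ne_psnd (pr i j hij)) ((coe_z (pr i j hij)).symm.trans rfl)
      with ⟨h1, h2⟩ | ⟨h1, h2⟩
    · exact ⟨pr i j hij, hP, by unfold mk2; rw [h1, h2]⟩
    · exact ⟨pr i j hij, hP, by unfold mk2; rw [h1, h2, Finset.insert_comm]⟩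
  · rintro ⟨z, hz, rfl⟩
    refine ⟨pfst z, psnd z, pfst_ne_psnd z, ?_, ?_⟩
    · rw [pr_pfst_psnd z]; exact hz
    · unfold mk2; rw [pr_pfst_psnd]

lemma S3_eq : {L | ∃ i j, ∃ h : i ≠ j, pr i j h ∈ P ∧ L = {bpt i, bpt j, cpt (pr i j h)}} =
    mk3 '' P := by
  ext L
  constructor
  · rintro ⟨i, j, hij, hP, rfl⟩
    rcases pair_eq (pfst_ne_psnd (pr i j hij)) ((coe_z (pr i j hij)).symm.trans rfl)
      with ⟨h1, h2⟩ | ⟨h1, h2⟩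
    · exact ⟨pr i j hij, hP, by unfold mk3; rw [h1, h2]⟩
    · exact ⟨pr i j hij, hP, by unfold mk3; rw [h1, h2, Finset.insert_comm]⟩
  · rintro ⟨z, hz, rfl⟩
    refine ⟨pfst z, psnd z, pfst_ne_psnd z, ?_, ?_⟩
    · rw [pr_pfst_psnd z]; exact hz
    · unfold mk3; rw [pr_pfst_psnd]

lemma S4_eq : {L : Finset (MVPoint X) | ∃ i, L = {ppt, apt i, bpt i}} =
    pline '' Set.univ := by
  ext L
  simp [pline, eq_comm]

lemma S5_eq : {L : Finset (MVPoint X) | ∃ h ∈ H, L = h.image cpt} =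
    (fun h => h.image cpt) '' H := by
  ext L
  simp [eq_comm]

lemma mka_inj : Function.Injective (mka (X := X)) := by
  intro z w e
  have h : cpt z ∈ mka w := by rw [← e]; unfold mka; simp
  unfold mka at h; simpa using h

lemma mkb_inj : Function.Injective (mkb (X := X)) := by
  intro z w e
  have h : cpt z ∈ mkb w := by rw [← e]; unfold mkb; simp
  unfold mkb at h; simpa using h

lemma mk2_inj : Function.Injective (mk2 (X := X)) := by
  intro z w e
  have h : cpt z ∈ mk2 w := by rw [← e]; unfold mk2; simp
  unfold mk2 at h; simpa using h

lemma mk3_inj : Function.Injective (mk3 (X := X)) := by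
  intro z w e
  have h : cpt z ∈ mk3 w := by rw [← e]; unfold mk3; simp
  unfold mk3 at h; simpa using h

lemma pline_inj : Function.Injective (pline (X := X)) := by
  intro i j e
  have h : apt i ∈ pline j := by rw [← e]; unfold pline; simp
  unfold pline at h; simpa using h

lemma img_inj : Function.Injective (fun h : Finset (P2 X) => h.image cpt) :=
  fun _ _ e => Finset.image_injective cpt_injective e

lemma mka_ne_mkb (z w : P2 X) : mka z ≠ mkb w := by
  intro e
  have h1 : cpt z ∈ mkb w := by rw [← e]; unfold mka; simp
  unfold mkb at h1; simp at h1; subst h1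
  have h2 : apt (pfst z) ∈ mkb z := by rw [← e]; unfold mka; simp
  unfold mkb at h2; simp at h2
  exact pfst_ne_psnd z h2

lemma mka_ne_mk2 (z w : P2 X) : mka z ≠ mk2 w := by
  intro e
  have h1 : bpt (psnd z) ∈ mk2 w := by rw [← e]; unfold mka; simp
  unfold mk2 at h1; simp at h1

lemma mka_ne_mk3 (z w : P2 X) : mka z ≠ mk3 w := by
  intro e
  have h1 : apt (pfst z) ∈ mk3 w := by rw [← e]; unfold mka; simp
  unfold mk3 at h1; simp at h1

lemma mka_ne_pline (z : P2 X) (i : X) : mka z ≠ pline i := by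
  intro e
  have h1 : (ppt : MVPoint X) ∈ mka z := by rw [e]; unfold pline; simp
  unfold mka at h1; simp at h1

lemma mka_ne_img (z : P2 X) (h : Finset (P2 X)) : mka z ≠ h.image cpt := by
  intro e
  have h1 : apt (pfst z) ∈ h.image cpt := by rw [← e]; unfold mka; simp
  simp at h1

lemma mkb_ne_mk2 (z w : P2 X) : mkb z ≠ mk2 w := by
  intro e
  have h1 : bpt (pfst z) ∈ mk2 w := by rw [← e]; unfold mkb; simp
  unfold mk2 at h1; simp at h1

lemma mkb_ne_mk3 (z w : P2 X) : mkb z ≠ mk3 w := by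
  intro e
  have h1 : apt (psnd z) ∈ mk3 w := by rw [← e]; unfold mkb; simp
  unfold mk3 at h1; simp at h1

lemma mkb_ne_pline (z : P2 X) (i : X) : mkb z ≠ pline i := by
  intro e
  have h1 : (ppt : MVPoint X) ∈ mkb z := by rw [e]; unfold pline; simp
  unfold mkb at h1; simp at h1

lemma mkb_ne_img (z : P2 X) (h : Finset (P2 X)) : mkb z ≠ h.image cpt := by
  intro e
  have h1 : apt (psnd z) ∈ h.image cpt := by rw [← e]; unfold mkb; simp
  simp at h1

lemma mk2_ne_mk3 (z w : P2 X) : mk2 z ≠ mk3 w := by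
  intro e
  have h1 : apt (pfst z) ∈ mk3 w := by rw [← e]; unfold mk2; simp
  unfold mk3 at h1; simp at h1

lemma mk2_ne_pline (z : P2 X) (i : X) : mk2 z ≠ pline i := by
  intro e
  have h1 : (ppt : MVPoint X) ∈ mk2 z := by rw [e]; unfold pline; simp
  unfold mk2 at h1; simp at h1

lemma mk2_ne_img (z : P2 X) (h : Finset (P2 X)) : mk2 z ≠ h.image cpt := by
  intro e
  have h1 : apt (pfst z) ∈ h.image cpt := by rw [← e]; unfold mk2; simp
  simp at h1

lemma mk3_ne_pline (z : P2 X) (i : X) : mk3 z ≠ pline i := by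
  intro e
  have h1 : (ppt : MVPoint X) ∈ mk3 z := by rw [e]; unfold pline; simp
  unfold mk3 at h1; simp at h1

lemma mk3_ne_img (z : P2 X) (h : Finset (P2 X)) : mk3 z ≠ h.image cpt := by
  intro e
  have h1 : bpt (pfst z) ∈ h.image cpt := by rw [← e]; unfold mk3; simp
  simp at h1

lemma pline_ne_img (i : X) (h : Finset (P2 X)) : pline i ≠ h.image cpt := by
  intro e
  have h1 : (ppt : MVPoint X) ∈ h.image cpt := by rw [← e]; unfold pline; simp
  simp at h1

lemma disj_img {α β γ : Type*} {f : α → Finset γ} {g : β → Finset γ}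
    (h : ∀ a b, f a ≠ g b) (A : Set α) (B : Set β) : Disjoint (f '' A) (g '' B) := by
  rw [Set.disjoint_left]
  rintro L ⟨a, _, rfl⟩ ⟨b, _, e⟩
  exact h a b e.symm

lemma MVlines_ncard : (MVlines P H).ncard =
    Pᶜ.ncard + Pᶜ.ncard + P.ncard + P.ncard + Fintype.card X + H.ncard := by
  have he : MVlines P H =
      ((((mka '' Pᶜ ∪ mkb '' Pᶜ) ∪ mk2 '' P) ∪ mk3 '' P) ∪ pline '' Set.univ) ∪
        (fun h => h.image cpt) '' H := by
    unfold MVlines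
    rw [S1_eq, S2_eq, S3_eq, S4_eq, S5_eq]
  have d1 : Disjoint (mka '' (Pᶜ : Set (P2 X))) (mkb '' Pᶜ) := disj_img mka_ne_mkb _ _
  have d2 : Disjoint (mka '' (Pᶜ : Set (P2 X)) ∪ mkb '' Pᶜ) (mk2 '' P) :=
    Set.disjoint_union_left.2 ⟨disj_img mka_ne_mk2 _ _, disj_img mkb_ne_mk2 _ _⟩
  have d3 : Disjoint ((mka '' (Pᶜ : Set (P2 X)) ∪ mkb '' Pᶜ) ∪ mk2 '' P) (mk3 '' P) :=
    Set.disjoint_union_left.2 ⟨Set.disjoint_union_left.2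
      ⟨disj_img mka_ne_mk3 _ _, disj_img mkb_ne_mk3 _ _⟩, disj_img mk2_ne_mk3 _ _⟩
  have d4 : Disjoint (((mka '' (Pᶜ : Set (P2 X)) ∪ mkb '' Pᶜ) ∪ mk2 '' P) ∪ mk3 '' P)
      (pline '' Set.univ) :=
    Set.disjoint_union_left.2 ⟨Set.disjoint_union_left.2 ⟨Set.disjoint_union_left.2
      ⟨disj_img mka_ne_pline _ _, disj_img mkb_ne_pline _ _⟩, disj_img mk2_ne_pline _ _⟩,
      disj_img mk3_ne_pline _ _⟩
  have d5 : Disjoint ((((mka '' (Pᶜ : Set (P2 X)) ∪ mkb '' Pᶜ) ∪ mk2 '' P) ∪ mk3 '' P) ∪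
      pline '' Set.univ) ((fun h => h.image cpt) '' H) :=
    Set.disjoint_union_left.2 ⟨Set.disjoint_union_left.2 ⟨Set.disjoint_union_left.2
      ⟨Set.disjoint_union_left.2 ⟨disj_img mka_ne_img _ _, disj_img mkb_ne_img _ _⟩,
        disj_img mk2_ne_img _ _⟩, disj_img mk3_ne_img _ _⟩, disj_img pline_ne_img _ _⟩
  rw [he, Set.ncard_union_eq d5 (Set.toFinite _) (Set.toFinite _),
    Set.ncard_union_eq d4 (Set.toFinite _) (Set.toFinite _),
    Set.ncard_union_eq d3 (Set.toFinite _) (Set.toFinite _),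
    Set.ncard_union_eq d2 (Set.toFinite _) (Set.toFinite _),
    Set.ncard_union_eq d1 (Set.toFinite _) (Set.toFinite _),
    Set.ncard_image_of_injective _ mka_inj, Set.ncard_image_of_injective _ mkb_inj,
    Set.ncard_image_of_injective _ mk2_inj, Set.ncard_image_of_injective _ mk3_inj,
    Set.ncard_image_of_injective _ pline_inj, Set.ncard_image_of_injective _ img_inj,
    Set.ncard_univ, Nat.card_eq_fintype_card]

lemma deg_ppt : {L ∈ MVlines P H | (ppt : MVPoint X) ∈ L} = pline '' Set.univ := by
  ext L
  constructor
  · rintro ⟨hL, hp⟩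
    obtain ⟨i, rfl⟩ := line_ppt hL hp
    exact ⟨i, trivial, rfl⟩
  · rintro ⟨i, -, rfl⟩
    refine ⟨mem_MVlines.2 (Or.inr (Or.inr (Or.inr (Or.inl ⟨i, rfl⟩)))), ?_⟩
    unfold pline; simp

open Classical in
noncomputable def aline (P : Set (P2 X)) (i j : X) : Finset (MVPoint X) :=
  if h : i = j then ∅
  else if pr i j h ∈ P then {apt i, apt j, cpt (pr i j h)} else {apt i, bpt j, cpt (pr i j h)}

open Classical in
noncomputable def bline (P : Set (P2 X)) (i j : X) : Finset (MVPoint X) :=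
  if h : i = j then ∅
  else if pr i j h ∈ P then {bpt i, bpt j, cpt (pr i j h)} else {apt j, bpt i, cpt (pr i j h)}

lemma deg_apt (i : X) : {L ∈ MVlines P H | apt i ∈ L} =
    insert (pline i) (aline P i '' {j | j ≠ i}) := by
  ext L
  constructor
  · rintro ⟨hL, hp⟩
    rcases mem_MVlines.1 hL with ⟨k, l, hkl, hP, rfl⟩ | ⟨k, l, hkl, hP, rfl⟩ |
      ⟨k, l, hkl, hP, rfl⟩ | ⟨k, rfl⟩ | ⟨hh, hhH, rfl⟩
    · simp at hp; subst hp
      exact Or.inr ⟨l, Ne.symm hkl, by unfold aline; rw [dif_neg hkl, if_neg hP]⟩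
    · simp at hp
      rcases hp with rfl | rfl
      · exact Or.inr ⟨l, Ne.symm hkl, by unfold aline; rw [dif_neg hkl, if_pos hP]⟩
      · refine Or.inr ⟨k, hkl, ?_⟩
        unfold aline
        rw [dif_neg (Ne.symm hkl), if_pos ((pr_comm' k i hkl (Ne.symm hkl)) ▸ hP),
          Finset.insert_comm, pr_comm' i k (Ne.symm hkl) hkl]
    · simp at hp
    · simp at hp; subst hp; exact Or.inl rfl
    · simp at hp
  · rintro (rfl | ⟨j, hj, rfl⟩)
    · exact ⟨mem_MVlines.2 (Or.inr (Or.inr (Or.inr (Or.inl ⟨i, rfl⟩)))), by unfold pline; simp⟩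
    · have hij : i ≠ j := Ne.symm hj
      constructor
      · unfold aline; rw [dif_neg hij]
        by_cases hP : pr i j hij ∈ P
        · rw [if_pos hP]; exact mem_MVlines.2 (Or.inr (Or.inl ⟨i, j, hij, hP, rfl⟩))
        · rw [if_neg hP]; exact mem_MVlines.2 (Or.inl ⟨i, j, hij, hP, rfl⟩)
      · unfold aline; rw [dif_neg hij]
        split_ifs <;> simp

lemma deg_bpt (i : X) : {L ∈ MVlines P H | bpt i ∈ L} =
    insert (pline i) (bline P i '' {j | j ≠ i}) := by
  ext L
  constructor
  · rintro ⟨hL, hp⟩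
    rcases mem_MVlines.1 hL with ⟨k, l, hkl, hP, rfl⟩ | ⟨k, l, hkl, hP, rfl⟩ |
      ⟨k, l, hkl, hP, rfl⟩ | ⟨k, rfl⟩ | ⟨hh, hhH, rfl⟩
    · simp at hp; subst hp
      refine Or.inr ⟨k, hkl, ?_⟩
      unfold bline
      rw [dif_neg (Ne.symm hkl), if_neg ((pr_comm' k i hkl (Ne.symm hkl)) ▸ hP),
        pr_comm' i k (Ne.symm hkl) hkl]
    · simp at hp
    · simp at hp
      rcases hp with rfl | rfl
      · exact Or.inr ⟨l, Ne.symm hkl, by unfold bline; rw [dif_neg hkl, if_pos hP]⟩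
      · refine Or.inr ⟨k, hkl, ?_⟩
        unfold bline
        rw [dif_neg (Ne.symm hkl), if_pos ((pr_comm' k i hkl (Ne.symm hkl)) ▸ hP),
          Finset.insert_comm, pr_comm' i k (Ne.symm hkl) hkl]
    · simp at hp; subst hp; exact Or.inl rfl
    · simp at hp
  · rintro (rfl | ⟨j, hj, rfl⟩)
    · exact ⟨mem_MVlines.2 (Or.inr (Or.inr (Or.inr (Or.inl ⟨i, rfl⟩)))), by unfold pline; simp⟩
    · have hij : i ≠ j := Ne.symm hj
      constructor
      · unfold bline; rw [dif_neg hij]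
        by_cases hP : pr i j hij ∈ P
        · rw [if_pos hP]; exact mem_MVlines.2 (Or.inr (Or.inr (Or.inl ⟨i, j, hij, hP, rfl⟩)))
        · rw [if_neg hP]
          exact mem_MVlines.2 (Or.inl ⟨j, i, hij.symm,
            (pr_comm' i j hij hij.symm) ▸ hP, by rw [pr_comm' j i hij.symm hij]⟩)
      · unfold bline; rw [dif_neg hij]
        split_ifs <;> simp

open Classical in
lemma deg_cpt (z : P2 X) : {L ∈ MVlines P H | cpt z ∈ L} =
    (if z ∈ P then ({mk2 z, mk3 z} : Set (Finset (MVPoint X))) else {mka z, mkb z}) ∪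
      (fun h => h.image cpt) '' {h ∈ H | z ∈ h} := by
  ext L
  constructor
  · rintro ⟨hL, hp⟩
    rcases mem_MVlines.1 hL with ⟨k, l, hkl, hP, rfl⟩ | ⟨k, l, hkl, hP, rfl⟩ |
      ⟨k, l, hkl, hP, rfl⟩ | ⟨k, rfl⟩ | ⟨hh, hhH, rfl⟩
    · simp at hp; subst hp
      rw [if_neg hP]
      rcases pair_eq (pfst_ne_psnd (pr k l hkl)) ((coe_z (pr k l hkl)).symm.trans rfl)
        with ⟨h1, h2⟩ | ⟨h1, h2⟩
      · exact Or.inl (Or.inl (by unfold mka; rw [h1, h2]))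
      · exact Or.inl (Or.inr (by unfold mkb; rw [h1, h2]; exact rfl))
    · simp at hp; subst hp
      rw [if_pos hP]
      rcases pair_eq (pfst_ne_psnd (pr k l hkl)) ((coe_z (pr k l hkl)).symm.trans rfl)
        with ⟨h1, h2⟩ | ⟨h1, h2⟩
      · exact Or.inl (Or.inl (by unfold mk2; rw [h1, h2]))
      · exact Or.inl (Or.inl (by unfold mk2; rw [h1, h2, Finset.insert_comm]))
    · simp at hp; subst hp
      rw [if_pos hP]
      rcases pair_eq (pfst_ne_psnd (pr k l hkl)) ((coe_z (pr k l hkl)).symm.trans rfl)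
        with ⟨h1, h2⟩ | ⟨h1, h2⟩
      · exact Or.inl (Or.inr (by unfold mk3; rw [h1, h2]; exact rfl))
      · exact Or.inl (Or.inr (by unfold mk3; rw [h1, h2, Finset.insert_comm]; exact rfl))
    · simp at hp
    · simp at hp
      exact Or.inr ⟨hh, ⟨hhH, hp⟩, rfl⟩
  · rintro (hA | ⟨hh, ⟨hhH, hzh⟩, rfl⟩)
    · by_cases hzP : z ∈ P
      · rw [if_pos hzP] at hA
        rcases hA with rfl | rfl
        · refine ⟨mem_MVlines.2 (Or.inr (Or.inl ⟨pfst z, psnd z, pfst_ne_psnd z,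
            by rw [pr_pfst_psnd z]; exact hzP, by unfold mk2; rw [pr_pfst_psnd]⟩)), ?_⟩
          unfold mk2; simp
        · refine ⟨mem_MVlines.2 (Or.inr (Or.inr (Or.inl ⟨pfst z, psnd z, pfst_ne_psnd z,
            by rw [pr_pfst_psnd z]; exact hzP, by unfold mk3; rw [pr_pfst_psnd]⟩))), ?_⟩
          unfold mk3; simp
      · rw [if_neg hzP] at hA
        rcases hA with rfl | rfl
        · refine ⟨mem_MVlines.2 (Or.inl ⟨pfst z, psnd z, pfst_ne_psnd z,
            by rw [pr_pfst_psnd z]; exact hzP, by unfold mka; rw [pr_pfst_psnd]⟩), ?_⟩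
          unfold mka; simp
        · refine ⟨mem_MVlines.2 (Or.inl ⟨psnd z, pfst z, (pfst_ne_psnd z).symm,
            by rw [pr_comm' _ _ _ (pfst_ne_psnd z), pr_pfst_psnd z]; exact hzP,
            by unfold mkb; rw [pr_comm' _ _ _ (pfst_ne_psnd z), pr_pfst_psnd]⟩), ?_⟩
          unfold mkb; simp
    · exact ⟨mem_MVlines.2 (Or.inr (Or.inr (Or.inr (Or.inr ⟨hh, hhH, rfl⟩)))), by simp [hzh]⟩

lemma aline_injOn (i : X) : Set.InjOn (aline P i) {j | j ≠ i} := by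
  intro j hj j' hj' e
  have hij : i ≠ j := Ne.symm hj
  have hij' : i ≠ j' := Ne.symm hj'
  have h1 : cpt (pr i j hij) ∈ aline P i j' := by
    rw [← e]; unfold aline; rw [dif_neg hij]; split_ifs <;> simp
  unfold aline at h1; rw [dif_neg hij'] at h1
  split_ifs at h1 <;> simp at h1 <;>
    (rcases pr_eq_iff.1 h1 with ⟨-, h⟩ | ⟨h1', -⟩
     · exact h
     · exact absurd h1'.symm hj')

lemma bline_injOn (i : X) : Set.InjOn (bline P i) {j | j ≠ i} := by
  intro j hj j' hj' e
  have hij : i ≠ j := Ne.symm hj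
  have hij' : i ≠ j' := Ne.symm hj'
  have h1 : cpt (pr i j hij) ∈ bline P i j' := by
    rw [← e]; unfold bline; rw [dif_neg hij]; split_ifs <;> simp
  unfold bline at h1; rw [dif_neg hij'] at h1
  split_ifs at h1 <;> simp at h1 <;>
    (rcases pr_eq_iff.1 h1 with ⟨-, h⟩ | ⟨h1', -⟩
     · exact h
     · exact absurd h1'.symm hj')

lemma pline_notmem_aline (i : X) : pline i ∉ aline P i '' {j | j ≠ i} := by
  rintro ⟨j, hj, e⟩
  have h1 : (ppt : MVPoint X) ∈ aline P i j := by rw [e]; unfold pline; simp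
  unfold aline at h1; rw [dif_neg (Ne.symm hj)] at h1
  split_ifs at h1 <;> simp at h1

lemma pline_notmem_bline (i : X) : pline i ∉ bline P i '' {j | j ≠ i} := by
  rintro ⟨j, hj, e⟩
  have h1 : (ppt : MVPoint X) ∈ bline P i j := by rw [e]; unfold pline; simp
  unfold bline at h1; rw [dif_neg (Ne.symm hj)] at h1
  split_ifs at h1 <;> simp at h1

lemma ncard_ne (i : X) : ({j | j ≠ i} : Set X).ncard = Fintype.card X - 1 := by
  have hcompl : ({j | j ≠ i} : Set X) = ({i} : Set X)ᶜ := by ext x; simp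
  have hc := Set.ncard_add_ncard_compl ({i} : Set X) (Set.toFinite _) (Set.toFinite _)
  rw [Set.ncard_singleton, Nat.card_eq_fintype_card] at hc
  rw [hcompl]
  omega

lemma MV_card3 (hH3 : ∀ h ∈ H, h.card = 3) : ∀ L ∈ MVlines P H, L.card = 3 := by
  intro L hL
  rcases mem_MVlines.1 hL with ⟨k, l, hkl, hP, rfl⟩ | ⟨k, l, hkl, hP, rfl⟩ |
    ⟨k, l, hkl, hP, rfl⟩ | ⟨k, rfl⟩ | ⟨hh, hhH, rfl⟩
  · rw [Finset.card_insert_of_notMem (by simp), Finset.card_insert_of_notMem (by simp),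
      Finset.card_singleton]
  · rw [Finset.card_insert_of_notMem (by simp [hkl]), Finset.card_insert_of_notMem (by simp),
      Finset.card_singleton]
  · rw [Finset.card_insert_of_notMem (by simp [hkl]), Finset.card_insert_of_notMem (by simp),
      Finset.card_singleton]
  · rw [Finset.card_insert_of_notMem (by simp), Finset.card_insert_of_notMem (by simp),
      Finset.card_singleton]
  · rw [Finset.card_image_of_injective _ cpt_injective]
    exact hH3 _ hhH

theorem stmt_18' (n : ℕ) (hn : Fintype.card X = n)
    (P : Set (P2 X)) (H : Set (Finset (P2 X)))
    (hH3 : ∀ h ∈ H, h.card = 3)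
    (hHr : ∀ z : P2 X, {h ∈ H | z ∈ h}.ncard = n - 2)
    (hHb : H.ncard = n.choose 3)
    (hHsts : ∀ h₁ ∈ H, ∀ h₂ ∈ H, ∀ z w : P2 X,
      z ≠ w → z ∈ h₁ → w ∈ h₁ → z ∈ h₂ → w ∈ h₂ → h₁ = h₂) :
    Nat.card (MVPoint X) = (n + 2).choose 2 ∧
    (MVlines P H).ncard = (n + 2).choose 3 ∧
    (∀ p : MVPoint X, {L ∈ MVlines P H | p ∈ L}.ncard = n) ∧
    (∀ L ∈ MVlines P H, L.card = 3) ∧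
    (∀ L₁ ∈ MVlines P H, ∀ L₂ ∈ MVlines P H, ∀ p q : MVPoint X,
      p ≠ q → p ∈ L₁ → q ∈ L₁ → p ∈ L₂ → q ∈ L₂ → L₁ = L₂) := by
  have hX : Nat.card X = n := by rw [Nat.card_eq_fintype_card, hn]
  have hP2 : Fintype.card (P2 X) = n.choose 2 := by
    rw [Fintype.card_finset_len, hn]
  refine ⟨?_, ?_, ?_, MV_card3 hH3, MV_linear hHsts⟩
  · have h1 : Nat.card (MVPoint X) = 1 + (2 * n + n.choose 2) := by
      rw [Nat.card_eq_fintype_card]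
      simp [Fintype.card_sum, Fintype.card_prod, hn, hP2]
    have h2 : (n + 2).choose 2 = (n + 1).choose 1 + (n.choose 1 + n.choose 2) := by
      rw [Nat.choose_succ_succ (n + 1) 1, Nat.choose_succ_succ n 1]
    rw [h1, h2, Nat.choose_one_right, Nat.choose_one_right]
    omega
  · rw [MVlines_ncard, hHb, hn]
    have hc := Set.ncard_add_ncard_compl P (Set.toFinite _) (Set.toFinite _)
    rw [Nat.card_eq_fintype_card, hP2] at hc
    have h3 : (n + 2).choose 3 = (n.choose 1 + n.choose 2) + (n.choose 2 + n.choose 3) := by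
      rw [Nat.choose_succ_succ (n + 1) 2, Nat.choose_succ_succ n 1, Nat.choose_succ_succ n 2]
    rw [h3, Nat.choose_one_right]
    omega
  · intro p
    rcases point_cases p with rfl | ⟨i, rfl⟩ | ⟨i, rfl⟩ | ⟨z, rfl⟩
    · rw [deg_ppt, Set.ncard_image_of_injective _ pline_inj, Set.ncard_univ, hX]
    · have hpos : 1 ≤ n := by
        have : Nonempty X := ⟨i⟩
        rw [← hn]
        exact Fintype.card_pos
      rw [deg_apt, Set.ncard_insert_of_notMem (pline_notmem_aline i) (Set.toFinite _),
        Set.ncard_image_of_injOn (aline_injOn i), ncard_ne, hn]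
      omega
    · have hpos : 1 ≤ n := by
        have : Nonempty X := ⟨i⟩
        rw [← hn]
        exact Fintype.card_pos
      rw [deg_bpt, Set.ncard_insert_of_notMem (pline_notmem_bline i) (Set.toFinite _),
        Set.ncard_image_of_injOn (bline_injOn i), ncard_ne, hn]
      omega
    · have hn2 : 2 ≤ n := by
        rw [← hn]
        have := Finset.card_le_univ z.1
        rw [z.2] at this
        exact this
      rw [deg_cpt]
      by_cases hzP : z ∈ P
      · rw [if_pos hzP]
        have hd : Disjoint ({mk2 z, mk3 z} : Set (Finset (MVPoint X)))
            ((fun h => h.image cpt) '' {h ∈ H | z ∈ h}) := by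
          rw [Set.disjoint_left]
          rintro L (rfl | rfl) ⟨hh, -, e⟩
          · exact mk2_ne_img z hh e.symm
          · exact mk3_ne_img z hh e.symm
        rw [Set.ncard_union_eq hd (Set.toFinite _) (Set.toFinite _),
          Set.ncard_pair (mk2_ne_mk3 z z), Set.ncard_image_of_injective _ img_inj, hHr]
        omega
      · rw [if_neg hzP]
        have hd : Disjoint ({mka z, mkb z} : Set (Finset (MVPoint X)))
            ((fun h => h.image cpt) '' {h ∈ H | z ∈ h}) := by
          rw [Set.disjoint_left]
          rintro L (rfl | rfl) ⟨hh, -, e⟩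
          · exact mka_ne_img z hh e.symm
          · exact mkb_ne_img z hh e.symm
        rw [Set.ncard_union_eq hd (Set.toFinite _) (Set.toFinite _),
          Set.ncard_pair (mka_ne_mkb z z), Set.ncard_image_of_injective _ img_inj, hHr]
        omega

/-- A multiveblen configuration `M(X, p, 𝒫, H)` with `|X| = n` and `H` a
`((n choose 2)_{n-2}, (n choose 3)_3)`-configuration is a
`(((n+2) choose 2)_n, ((n+2) choose 3)_3)`-configuration. -/
theorem stmt_18 (n : ℕ) (hn : Fintype.card X = n)
    (P : Set (P2 X)) (H : Set (Finset (P2 X)))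
    (hH3 : ∀ h ∈ H, h.card = 3)
    (hHr : ∀ z : P2 X, {h ∈ H | z ∈ h}.ncard = n - 2)
    (hHb : H.ncard = n.choose 3)
    (hHsts : ∀ h₁ ∈ H, ∀ h₂ ∈ H, ∀ z w : P2 X,
      z ≠ w → z ∈ h₁ → w ∈ h₁ → z ∈ h₂ → w ∈ h₂ → h₁ = h₂) :
    Nat.card (MVPoint X) = (n + 2).choose 2 ∧
    (MVlines P H).ncard = (n + 2).choose 3 ∧
    (∀ p : MVPoint X, {L ∈ MVlines P H | p ∈ L}.ncard = n) ∧
    (∀ L ∈ MVlines P H, L.card = 3) ∧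
    (∀ L₁ ∈ MVlines P H, ∀ L₂ ∈ MVlines P H, ∀ p q : MVPoint X,
      p ≠ q → p ∈ L₁ → q ∈ L₁ → p ∈ L₂ → q ∈ L₂ → L₁ = L₂) := by
  exact stmt_18' n hn P H hH3 hHr hHb hHsts
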